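/- arXiv:2512.09181 — 2 statements merged into one kernel-verified Lean document; each statement's English description precedes it below -/
import Mathlib

section
/- Let F be a field in which 2 ≠ 0 (characteristic different from 2). Then there is no injective map φ from the point set of the Fano plane ℙ²(𝔽₂) = Projectivization 𝔽₂ (Fin 3 → 𝔽₂) to the projective plane ℙ²(F) = Projectivization F (Fin 3 → F) such that for all points p, q, r of ℙ²(𝔽₂): p, q, r are collinear if and only if φ(p), φ(q), φ(r) are collinear. In particular (taking F = ℂ), no configuration of points and lines in ℂP² realizes the combinatorial type of the Fano arrangement of seven lines meeting at seven triple points. -/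
noncomputable section

/-- Three points of a projective plane `ℙ²(K)` are collinear if the span of their
representative lines has dimension at most `2`, i.e. they lie on a common projective line. -/
def Collinear3 (K : Type*) [Field K] (p q r : Projectivization K (Fin 3 → K)) : Prop :=
  Module.finrank K ↥(p.submodule ⊔ q.submodule ⊔ r.submodule) ≤ 2

lemma collinear3_mk_iff (K : Type*) [Field K] (u v w : Fin 3 → K) (hu : u ≠ 0) (hv : v ≠ 0)
    (hw : w ≠ 0) :
    Collinear3 K (Projectivization.mk K u hu) (Projectivization.mk K v hv)
      (Projectivization.mk K w hw) ↔ Matrix.det (Matrix.of ![u, v, w]) = 0 := by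
  have hrange : Set.range ![u, v, w] = {u} ∪ ({v} ∪ {w}) := by
    ext x
    simp [Fin.exists_fin_succ, or_assoc]
  have hspan : (Projectivization.mk K u hu).submodule ⊔ (Projectivization.mk K v hv).submodule
      ⊔ (Projectivization.mk K w hw).submodule = Submodule.span K (Set.range ![u, v, w]) := by
    simp only [Projectivization.submodule_mk, hrange, Submodule.span_union, sup_assoc,
      Submodule.span_singleton_eq_span_singleton]
  unfold Collinear3
  rw [hspan]
  constructor
  · intro h
    by_contra hdet
    have : LinearIndependent K ![u, v, w] := by
      rw [show ![u,v,w] = (Matrix.of ![u,v,w]).row from rfl,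
        Matrix.linearIndependent_rows_iff_isUnit]
      exact (Matrix.isUnit_iff_isUnit_det _).2 (isUnit_iff_ne_zero.2 hdet)
    have h3 := linearIndependent_iff_card_eq_finrank_span.1 this
    simp [Set.finrank] at h3
    omega
  · intro hdet
    by_contra h
    push_neg at h
    have hle : Module.finrank K ↥(Submodule.span K (Set.range ![u, v, w])) ≤ 3 := by
      have := Submodule.finrank_le (Submodule.span K (Set.range ![u, v, w]))
      simpa using this
    have h3 : Module.finrank K ↥(Submodule.span K (Set.range ![u, v, w])) = 3 := by omega
    have : LinearIndependent K ![u, v, w] := by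
      rw [linearIndependent_iff_card_eq_finrank_span]
      simp [Set.finrank, h3]
    rw [show ![u,v,w] = (Matrix.of ![u,v,w]).row from rfl,
      Matrix.linearIndependent_rows_iff_isUnit, Matrix.isUnit_iff_isUnit_det,
      isUnit_iff_ne_zero] at this
    exact this hdet

lemma zmod2_mk_eq_iff (v w : Fin 3 → ZMod 2) (hv : v ≠ 0) (hw : w ≠ 0) :
    Projectivization.mk (ZMod 2) v hv = Projectivization.mk (ZMod 2) w hw ↔ v = w := by
  rw [Projectivization.mk_eq_mk_iff]
  constructor
  · rintro ⟨u, hu⟩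
    have h1 : (u : ZMod 2) = 1 := by
      have h0 := u.ne_zero
      revert h0
      generalize (u : ZMod 2) = x
      revert x; decide
    rw [Units.smul_def, h1, one_smul] at hu
    exact hu.symm
  · rintro rfl
    exact ⟨1, one_smul _ _⟩

lemma proj_eq_of_smul {F : Type*} [Field F] (x y : Fin 3 → F) (hx : x ≠ 0) (hy : y ≠ 0) (t : F)
    (h : x = t • y) : Projectivization.mk F x hx = Projectivization.mk F y hy := by
  have ht : t ≠ 0 := by rintro rfl; rw [zero_smul] at h; exact hx h
  rw [Projectivization.mk_eq_mk_iff]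
  exact ⟨Units.mk0 t ht, h.symm⟩

theorem stmt4 (F : Type*) [Field F] (h2 : (2 : F) ≠ 0) :
    ¬ ∃ φ : Projectivization (ZMod 2) (Fin 3 → ZMod 2) → Projectivization F (Fin 3 → F),
        Function.Injective φ ∧
        ∀ p q r, Collinear3 (ZMod 2) p q r ↔ Collinear3 F (φ p) (φ q) (φ r) := by
  rintro ⟨φ, hinj, hcol⟩
  -- the seven Fano points
  let P1 := Projectivization.mk (ZMod 2) (![1,0,0] : Fin 3 → ZMod 2) (by decide)
  let P2 := Projectivization.mk (ZMod 2) (![0,1,0] : Fin 3 → ZMod 2) (by decide)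
  let P3 := Projectivization.mk (ZMod 2) (![0,0,1] : Fin 3 → ZMod 2) (by decide)
  let P4 := Projectivization.mk (ZMod 2) (![1,1,0] : Fin 3 → ZMod 2) (by decide)
  let P5 := Projectivization.mk (ZMod 2) (![1,0,1] : Fin 3 → ZMod 2) (by decide)
  let P6 := Projectivization.mk (ZMod 2) (![0,1,1] : Fin 3 → ZMod 2) (by decide)
  let P7 := Projectivization.mk (ZMod 2) (![1,1,1] : Fin 3 → ZMod 2) (by decide)
  -- transfer of collinearity to determinants of representatives
  have key : ∀ p q r, Collinear3 (ZMod 2) p q r ↔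
      Matrix.det (Matrix.of ![(φ p).rep, (φ q).rep, (φ r).rep]) = 0 := by
    intro p q r
    rw [hcol p q r]
    conv_lhs => rw [← (φ p).mk_rep, ← (φ q).mk_rep, ← (φ r).mk_rep]
    exact collinear3_mk_iff F _ _ _ _ _ _
  set a := (φ P1).rep with ha_def
  set b := (φ P2).rep with hb_def
  set c := (φ P3).rep with hc_def
  set d := (φ P4).rep with hd_def
  set e := (φ P5).rep with he_def
  set f := (φ P6).rep with hf_def
  set g := (φ P7).rep with hg_def
  have col : ∀ u v w : Fin 3 → ZMod 2, ∀ hu hv hw,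
      Collinear3 (ZMod 2) (Projectivization.mk (ZMod 2) u hu) (Projectivization.mk (ZMod 2) v hv)
        (Projectivization.mk (ZMod 2) w hw) ↔ Matrix.det (Matrix.of ![u, v, w]) = 0 :=
    fun u v w hu hv hw => collinear3_mk_iff (ZMod 2) u v w hu hv hw
  -- collinear triples in the Fano plane
  have L1 : Matrix.det (Matrix.of ![a, b, d]) = 0 :=
    (key P1 P2 P4).1 ((col _ _ _ _ _ _).2 (by decide))
  have L2 : Matrix.det (Matrix.of ![a, c, e]) = 0 :=
    (key P1 P3 P5).1 ((col _ _ _ _ _ _).2 (by decide))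
  have L3 : Matrix.det (Matrix.of ![b, c, f]) = 0 :=
    (key P2 P3 P6).1 ((col _ _ _ _ _ _).2 (by decide))
  have L4 : Matrix.det (Matrix.of ![d, e, f]) = 0 :=
    (key P4 P5 P6).1 ((col _ _ _ _ _ _).2 (by decide))
  have L5 : Matrix.det (Matrix.of ![c, d, g]) = 0 :=
    (key P3 P4 P7).1 ((col _ _ _ _ _ _).2 (by decide))
  have L6 : Matrix.det (Matrix.of ![b, e, g]) = 0 :=
    (key P2 P5 P7).1 ((col _ _ _ _ _ _).2 (by decide))
  have L7 : Matrix.det (Matrix.of ![a, f, g]) = 0 :=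
    (key P1 P6 P7).1 ((col _ _ _ _ _ _).2 (by decide))
  -- a, b, c are independent
  have hP : Matrix.det (Matrix.of ![a, b, c]) ≠ 0 := by
    intro h
    exact absurd ((key P1 P2 P3).2 h) (by rw [col]; decide)
  set P : Matrix (Fin 3) (Fin 3) F := Matrix.of ![a, b, c] with hP_def
  have hPdet : IsUnit P.det := isUnit_iff_ne_zero.2 hP
  -- coordinates
  have hcoord : ∀ x : Fin 3 → F, Matrix.vecMul (Matrix.vecMul x P⁻¹) P = x := by
    intro x
    rw [Matrix.vecMul_vecMul, Matrix.nonsing_inv_mul P hPdet, Matrix.vecMul_one]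
  have detmul : ∀ cu cv cw : Fin 3 → F,
      Matrix.det (Matrix.of ![Matrix.vecMul cu P, Matrix.vecMul cv P, Matrix.vecMul cw P]) =
        Matrix.det (Matrix.of ![cu, cv, cw]) * P.det := by
    intro cu cv cw
    rw [← Matrix.det_mul]
    congr 1
    ext i j
    fin_cases i <;>
      simp [Matrix.mul_apply, Matrix.vecMul, dotProduct, Fin.sum_univ_three]
  have hva : Matrix.vecMul ![1,0,0] P = a := by
    funext j; simp [Matrix.vecMul, dotProduct, Fin.sum_univ_three, hP_def]
  have hvb : Matrix.vecMul ![0,1,0] P = b := by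
    funext j; simp [Matrix.vecMul, dotProduct, Fin.sum_univ_three, hP_def]
  have hvc : Matrix.vecMul ![0,0,1] P = c := by
    funext j; simp [Matrix.vecMul, dotProduct, Fin.sum_univ_three, hP_def]
  set d' := Matrix.vecMul d P⁻¹ with hd'
  set e' := Matrix.vecMul e P⁻¹ with he'
  set f' := Matrix.vecMul f P⁻¹ with hf'
  set g' := Matrix.vecMul g P⁻¹ with hg'
  have hvd : Matrix.vecMul d' P = d := hcoord d
  have hve : Matrix.vecMul e' P = e := hcoord e
  have hvf : Matrix.vecMul f' P = f := hcoord f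
  have hvg : Matrix.vecMul g' P = g := hcoord g
  -- translate determinant conditions into coordinates
  have T : ∀ (cu cv cw : Fin 3 → F) (u v w : Fin 3 → F), Matrix.vecMul cu P = u →
      Matrix.vecMul cv P = v → Matrix.vecMul cw P = w →
      Matrix.det (Matrix.of ![u, v, w]) = 0 → Matrix.det (Matrix.of ![cu, cv, cw]) = 0 := by
    rintro cu cv cw u v w rfl rfl rfl h
    rw [detmul] at h
    exact (mul_eq_zero.1 h).resolve_right hP
  have E1 := T _ _ _ _ _ _ hva hvb hvd L1
  have E2 := T _ _ _ _ _ _ hva hvc hve L2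
  have E3 := T _ _ _ _ _ _ hvb hvc hvf L3
  have E4 := T _ _ _ _ _ _ hvd hve hvf L4
  have E5 := T _ _ _ _ _ _ hvc hvd hvg L5
  have E6 := T _ _ _ _ _ _ hvb hve hvg L6
  have E7 := T _ _ _ _ _ _ hva hvf hvg L7
  simp [Matrix.det_fin_three] at E1 E2 E3 E4 E5 E6 E7
  -- helper: equal images give equal points
  have imageq : ∀ (p q : Projectivization (ZMod 2) (Fin 3 → ZMod 2)) (t : F),
      (φ p).rep = t • (φ q).rep → p = q := by
    intro p q t h
    apply hinj
    rw [← (φ p).mk_rep, ← (φ q).mk_rep]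
    exact proj_eq_of_smul _ _ _ _ t h
  -- nonvanishing of various coordinates
  have hd1 : d' 1 ≠ 0 := by
    intro h0
    have hda : d = d' 0 • a := by
      rw [← hvd]; funext j
      simp [Matrix.vecMul, dotProduct, Fin.sum_univ_three, h0, E1, hP_def]
    have h := imageq P4 P1 (d' 0) hda
    simp only [P4, P1, zmod2_mk_eq_iff] at h
    exact absurd (congrFun h 1) (by decide)
  have hd0 : d' 0 ≠ 0 := by
    intro h0
    have hdb : d = d' 1 • b := by
      rw [← hvd]; funext j
      simp [Matrix.vecMul, dotProduct, Fin.sum_univ_three, h0, E1, hP_def]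
    have h := imageq P4 P2 (d' 1) hdb
    simp only [P4, P2, zmod2_mk_eq_iff] at h
    exact absurd (congrFun h 0) (by decide)
  have he2 : e' 2 ≠ 0 := by
    intro h0
    have hea : e = e' 0 • a := by
      rw [← hve]; funext j
      simp [Matrix.vecMul, dotProduct, Fin.sum_univ_three, h0, E2, hP_def]
    have h := imageq P5 P1 (e' 0) hea
    simp only [P5, P1, zmod2_mk_eq_iff] at h
    exact absurd (congrFun h 2) (by decide)
  have he0 : e' 0 ≠ 0 := by
    intro h0
    have hec : e = e' 2 • c := by
      rw [← hve]; funext j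
      simp [Matrix.vecMul, dotProduct, Fin.sum_univ_three, h0, E2, hP_def]
    have h := imageq P5 P3 (e' 2) hec
    simp only [P5, P3, zmod2_mk_eq_iff] at h
    exact absurd (congrFun h 0) (by decide)
  have hf1 : f' 1 ≠ 0 := by
    intro h0
    have hfc : f = f' 2 • c := by
      rw [← hvf]; funext j
      simp [Matrix.vecMul, dotProduct, Fin.sum_univ_three, h0, E3, hP_def]
    have h := imageq P6 P3 (f' 2) hfc
    simp only [P6, P3, zmod2_mk_eq_iff] at h
    exact absurd (congrFun h 1) (by decide)
  have hg0 : g' 0 ≠ 0 := by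
    intro h0
    have hg1 : g' 1 = 0 := by
      have h := E5
      rw [h0, mul_zero, sub_zero] at h
      exact (mul_eq_zero.1 h).resolve_left hd0
    have hg2 : g' 2 = 0 := by
      have h := E6
      rw [h0, mul_zero, add_zero, neg_eq_zero] at h
      exact (mul_eq_zero.1 h).resolve_left he0
    have hg : g = 0 := by
      rw [← hvg]; funext j
      simp [Matrix.vecMul, dotProduct, Fin.sum_univ_three, h0, hg1, hg2]
    exact (φ P7).rep_nonzero hg
  -- the final algebraic contradiction
  rw [E1, E2, E3] at E4
  have key2 : (2 : F) * (d' 1 * e' 2 * f' 1 * g' 0) = 0 := by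
    linear_combination -g' 1 * E4 - e' 2 * f' 1 * E5 + d' 1 * f' 1 * E6 + d' 1 * e' 0 * E7
  exact h2 ((mul_eq_zero.1 key2).resolve_right
    (mul_ne_zero (mul_ne_zero (mul_ne_zero hd1 he2) hf1) hg0))
end
end

section
/- Let M be the 4×8 integer matrix with rows (1,−1,−1,−1,0,0,0,0), (1,−1,0,0,−1,−1,0,0), (1,0,−1,0,−1,0,0,−1), (1,0,0,−1,0,−1,0,−1). Then the cokernel of the ℤ-linear map ℤ⁸ → ℤ⁴ given by x ↦ M·x (equivalently, the quotient of ℤ⁴ by the span of the columns of M) is isomorphic as an abelian group to ℤ/2ℤ. (This is the computation showing that H₁ of the complement of the four blue spheres F₁ ∪ ⋯ ∪ F₄ in ℂP² # 7(ℂP²-bar) is ℤ/2ℤ, in the branched double cover proof of the non-realizability of the Fano arrangement.) -/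
noncomputable section

/-- The intersection matrix of the four blue spheres `F₁, …, F₄` in the basis
`h, e₁, …, e₇` of `H₂(ℂP² # 7 ℂP²-bar)`. -/
def M : Matrix (Fin 4) (Fin 8) ℤ :=
  !![1, -1, -1, -1,  0,  0, 0,  0;
     1, -1,  0,  0, -1, -1, 0,  0;
     1,  0, -1,  0, -1,  0, 0, -1;
     1,  0,  0, -1,  0, -1, 0, -1]

lemma vec4_two {α : Type*} (a b c d : α) : ![a,b,c,d] 2 = c := rfl
lemma vec4_three {α : Type*} (a b c d : α) : ![a,b,c,d] 3 = d := rfl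

lemma vec8_five {α : Type*} (a b c d e f g h : α) : ![a,b,c,d,e,f,g,h] 5 = f := rfl
lemma vec8_six {α : Type*} (a b c d e f g h : α) : ![a,b,c,d,e,f,g,h] 6 = g := rfl
lemma vec8_seven {α : Type*} (a b c d e f g h : α) : ![a,b,c,d,e,f,g,h] 7 = h := rfl

lemma M_mulVec (x : Fin 8 → ℤ) :
    M.mulVec x = ![x 0 - x 1 - x 2 - x 3, x 0 - x 1 - x 4 - x 5,
      x 0 - x 2 - x 4 - x 7, x 0 - x 3 - x 5 - x 7] := by
  funext i
  fin_cases i <;>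
    (simp [M, Matrix.mulVec, dotProduct, Fin.sum_univ_eight,
      vec8_five, vec8_six, vec8_seven]; ring)

noncomputable def phi11 : (Fin 4 → ℤ) →ₗ[ℤ] ZMod 2 where
  toFun v := ((v 0 + v 1 + v 2 + v 3 : ℤ) : ZMod 2)
  map_add' x y := by push_cast [Pi.add_apply]; ring
  map_smul' c x := by
    simp only [Pi.smul_apply, smul_eq_mul, RingHom.id_apply, zsmul_eq_mul]
    push_cast
    ring

theorem stmt11 :
    Nonempty (((Fin 4 → ℤ) ⧸ LinearMap.range M.mulVecLin) ≃+ ZMod 2) := by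
  have hsurj : Function.Surjective phi11 := by
    intro z
    refine ⟨![(z.val : ℤ), 0, 0, 0], ?_⟩
    simp [phi11, ZMod.natCast_val, ZMod.cast_id]
  have hker : LinearMap.range M.mulVecLin = LinearMap.ker phi11 := by
    ext v
    constructor
    · rintro ⟨x, rfl⟩
      simp only [LinearMap.mem_ker, phi11, LinearMap.coe_mk, AddHom.coe_mk,
        Matrix.mulVecLin_apply, M_mulVec]
      simp only [Matrix.cons_val_zero, Matrix.cons_val_one, Matrix.head_cons,
        vec4_two, vec4_three]
      rw [ZMod.intCast_zmod_eq_zero_iff_dvd]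
      exact ⟨2 * x 0 - x 1 - x 2 - x 3 - x 4 - x 5 - x 7, by ring⟩
    · intro hv
      simp only [LinearMap.mem_ker, phi11, LinearMap.coe_mk, AddHom.coe_mk] at hv
      rw [ZMod.intCast_zmod_eq_zero_iff_dvd] at hv
      obtain ⟨t, ht⟩ := hv
      set s : ℤ := t - v 1 - v 2 - v 3 with hs
      refine ⟨![0, -v 1 - s, -v 2 - s, -v 3, s, 0, 0, 0], ?_⟩
      rw [Matrix.mulVecLin_apply, M_mulVec]
      funext i
      fin_cases i <;>
        simp [vec8_five, vec8_six, vec8_seven] <;> omega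
  exact ⟨((Submodule.quotEquivOfEq _ _ hker).trans
    (phi11.quotKerEquivOfSurjective hsurj)).toAddEquiv⟩
end
end
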